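/- Let F be a positive semidefinite real form (homogeneous polynomial nonnegative on ℝ^d) that is not a sum of squares of real polynomials, and let s be an irreducible real form that changes sign on ℝ^d (is indefinite). Then s²·F is positive semidefinite but is also not a sum of squares of real polynomials. -/

import Mathlib

open MvPolynomial

/-- A real form is PSD if it is nonnegative on `ℝ^d`. -/
def IsPSD {d : ℕ} (F : MvPolynomial (Fin d) ℝ) : Prop :=
  ∀ x : Fin d → ℝ, 0 ≤ eval x F

/-- A real polynomial is SOS if it is a finite sum of squares of real polynomials. -/
def IsSOS {d : ℕ} (F : MvPolynomial (Fin d) ℝ) : Prop :=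
  ∃ (k : ℕ) (h : Fin k → MvPolynomial (Fin d) ℝ), F = ∑ i, (h i) ^ 2

/-- A real form is indefinite if it changes sign on `ℝ^d`. -/
def IsIndefinite {d : ℕ} (s : MvPolynomial (Fin d) ℝ) : Prop :=
  (∃ x : Fin d → ℝ, 0 < eval x s) ∧ (∃ y : Fin d → ℝ, eval y s < 0)


lemma analyticOnNhd_eval {d : ℕ} (f : MvPolynomial (Fin d) ℝ) :
    AnalyticOnNhd ℝ (fun p : Fin d → ℝ => eval p f) Set.univ := by
  induction f using MvPolynomial.induction_on with
  | C a => simpa using analyticOnNhd_const (𝕜 := ℝ) (v := a) (E := Fin d → ℝ) (s := Set.univ)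
  | add p q hp hq => simpa [Pi.add_def] using hp.add hq
  | mul_X p i hp =>
      have hproj : AnalyticOnNhd ℝ (fun x : Fin d → ℝ => x i) Set.univ :=
        fun x _ => (ContinuousLinearMap.proj (R := ℝ) (φ := fun _ : Fin d => ℝ) i).analyticAt x
      simpa using hp.mul hproj

lemma continuous_eval_aux {d : ℕ} (f : MvPolynomial (Fin d) ℝ) :
    Continuous (fun p : Fin d → ℝ => eval p f) := by
  rw [← continuousOn_univ]
  exact (analyticOnNhd_eval f).continuousOn

lemma eval_zero_on_ball {d : ℕ} {f : MvPolynomial (Fin d) ℝ} {a : Fin d → ℝ} {r : ℝ}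
    (hr : 0 < r) (h : ∀ p ∈ Metric.ball a r, eval p f = 0) : f = 0 := by
  have han := analyticOnNhd_eval f
  have heq : Set.EqOn (fun p : Fin d → ℝ => eval p f) 0 Set.univ := by
    apply han.eqOn_zero_of_preconnected_of_eventuallyEq_zero isPreconnected_univ (Set.mem_univ a)
    exact Filter.eventually_of_mem (Metric.ball_mem_nhds a hr) h
  apply MvPolynomial.funext
  intro x
  simpa using heq (Set.mem_univ x)


namespace Scratch
variable {d : ℕ}

noncomputable def Phi (v : Fin d → ℝ) : MvPolynomial (Fin d) ℝ →+* Polynomial (MvPolynomial (Fin d) ℝ) :=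
  eval₂Hom (Polynomial.C.comp MvPolynomial.C)
    (fun i => Polynomial.C (X i) + Polynomial.C (MvPolynomial.C (v i)) * Polynomial.X)

noncomputable def Psi (v : Fin d → ℝ) : MvPolynomial (Fin d) ℝ →+* Polynomial (MvPolynomial (Fin d) ℝ) :=
  eval₂Hom (Polynomial.C.comp MvPolynomial.C)
    (fun i => Polynomial.C (X i) - Polynomial.C (MvPolynomial.C (v i)) * Polynomial.X)

noncomputable def sigmaE (v : Fin d → ℝ) : Polynomial (MvPolynomial (Fin d) ℝ) →+* Polynomial (MvPolynomial (Fin d) ℝ) :=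
  Polynomial.eval₂RingHom (Phi v) Polynomial.X

noncomputable def tauE (v : Fin d → ℝ) : Polynomial (MvPolynomial (Fin d) ℝ) →+* Polynomial (MvPolynomial (Fin d) ℝ) :=
  Polynomial.eval₂RingHom (Psi v) Polynomial.X

lemma tau_comp_sigma (v : Fin d → ℝ) : (tauE v).comp (sigmaE v) = RingHom.id _ := by
  apply Polynomial.ringHom_ext'
  · apply MvPolynomial.ringHom_ext
    · intro r; simp [tauE, sigmaE, Phi, Psi]
    · intro i; simp [tauE, sigmaE, Phi, Psi]
  · simp [tauE, sigmaE]

lemma sigma_comp_tau (v : Fin d → ℝ) : (sigmaE v).comp (tauE v) = RingHom.id _ := by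
  apply Polynomial.ringHom_ext'
  · apply MvPolynomial.ringHom_ext
    · intro r; simp [tauE, sigmaE, Phi, Psi]
    · intro i; simp [tauE, sigmaE, Phi, Psi]
  · simp [tauE, sigmaE]

lemma phi_eval (v : Fin d → ℝ) (p : Fin d → ℝ) (t : ℝ) (f : MvPolynomial (Fin d) ℝ) :
    Polynomial.eval₂ (MvPolynomial.eval p) t (Phi v f) = eval (fun i => p i + t * v i) f := by
  have : (Polynomial.eval₂RingHom (MvPolynomial.eval p) t).comp (Phi v)
      = (MvPolynomial.eval (fun i => p i + t * v i)) := by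
    apply MvPolynomial.ringHom_ext
    · intro r; simp [Phi]
    · intro i; simp [Phi]; ring
  exact DFunLike.congr_fun this f

end Scratch

namespace Scratch

lemma dvd_of_vanish {d : ℕ} (s g : MvPolynomial (Fin d) ℝ)
    (hsirr : Irreducible s)
    (hsind : (∃ x : Fin d → ℝ, 0 < eval x s) ∧ (∃ y : Fin d → ℝ, eval y s < 0))
    (hvan : ∀ p : Fin d → ℝ, eval p s = 0 → eval p g = 0) : s ∣ g := by
  classical
  by_contra hndvd
  obtain ⟨⟨x, hx⟩, ⟨y, hy⟩⟩ := hsind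
  set v : Fin d → ℝ := fun i => y i - x i with hv
  -- the ring equivalence
  let e : Polynomial (MvPolynomial (Fin d) ℝ) ≃+* Polynomial (MvPolynomial (Fin d) ℝ) :=
    RingEquiv.ofRingHom (sigmaE v) (tauE v) (sigma_comp_tau v) (tau_comp_sigma v)
  set S : Polynomial (MvPolynomial (Fin d) ℝ) := Phi v s with hS
  set G : Polynomial (MvPolynomial (Fin d) ℝ) := Phi v g with hG
  have heS : e (Polynomial.C s) = S := by
    simp [e, sigmaE, RingEquiv.ofRingHom, hS]
  have heG : e (Polynomial.C g) = G := by
    simp [e, sigmaE, RingEquiv.ofRingHom, hG]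
  have hsprime : Prime s := (UniqueFactorizationMonoid.irreducible_iff_prime).mp hsirr
  have hCs : Prime (Polynomial.C s : Polynomial (MvPolynomial (Fin d) ℝ)) := Polynomial.prime_C_iff.mpr hsprime
  have hSprime : Prime S := heS ▸ ((MulEquiv.prime_iff e).mpr hCs)
  -- S does not divide G
  have hSG : ¬ S ∣ G := by
    rintro ⟨q, hq⟩
    apply hndvd
    have : Polynomial.C g = Polynomial.C s * e.symm q := by
      apply e.injective
      simp [heS, heG, hq]
    exact ⟨(e.symm q).coeff 0, by simpa [Polynomial.coeff_C_mul] using congrArg (fun p => Polynomial.coeff p 0) this⟩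
  -- S has positive degree
  have hS0 : Polynomial.eval₂ (MvPolynomial.eval x) 0 S = eval x s := by
    have hxx : (fun i => x i + 0 * v i) = x := by funext i; ring
    rw [hS, phi_eval, hxx]
  have hS1 : Polynomial.eval₂ (MvPolynomial.eval x) 1 S = eval y s := by
    have hyy : (fun i => x i + 1 * v i) = y := by funext i; simp [hv]
    rw [hS, phi_eval, hyy]
  have hSdeg : S.natDegree ≠ 0 := by
    intro hdeg
    have hC := Polynomial.eq_C_of_natDegree_eq_zero hdeg
    rw [hC] at hS0 hS1
    simp [Polynomial.eval₂_C] at hS0 hS1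
    rw [hS0] at hS1
    linarith
  -- S is primitive
  have hSprim : S.IsPrimitive := by
    intro r hr
    obtain ⟨q, hq⟩ := hr
    rcases hSprime.irreducible.isUnit_or_isUnit hq with h | h
    · exact Polynomial.isUnit_C.mp h
    · exfalso
      apply hSdeg
      have : S.natDegree ≤ (Polynomial.C r).natDegree + q.natDegree := hq ▸ Polynomial.natDegree_mul_le
      simpa [Polynomial.natDegree_eq_zero_of_isUnit h] using this
  -- pass to the fraction field
  letI : NormalizationMonoid (MvPolynomial (Fin d) ℝ) :=
    UniqueFactorizationMonoid.strongNormalizationMonoid.toNormalizationMonoid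
  letI : NormalizedGCDMonoid (MvPolynomial (Fin d) ℝ) :=
    UniqueFactorizationMonoid.toNormalizedGCDMonoid _
  set K := FractionRing (MvPolynomial (Fin d) ℝ) with hK
  set φ : MvPolynomial (Fin d) ℝ →+* K := algebraMap _ K with hφ
  have hφinj : Function.Injective φ := IsFractionRing.injective _ _
  have hmapinj : Function.Injective (Polynomial.map φ) := Polynomial.map_injective φ hφinj
  have hSkirr : Irreducible (S.map φ) :=
    (hSprim.irreducible_iff_irreducible_map_fraction_map (K := K)).mp hSprime.irreducible
  have hSkndvd : ¬ S.map φ ∣ G.map φ := by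
    rintro ⟨Q, hQ⟩
    obtain ⟨b, hb⟩ := IsLocalization.integerNormalization_map_to_map
      (nonZeroDivisors (MvPolynomial (Fin d) ℝ)) Q
    have hb0 : (b : MvPolynomial (Fin d) ℝ) ≠ 0 := nonZeroDivisors.coe_ne_zero b
    have hkey : Polynomial.C (b : MvPolynomial (Fin d) ℝ) * G
        = S * IsLocalization.integerNormalization (nonZeroDivisors (MvPolynomial (Fin d) ℝ)) Q := by
      apply hmapinj
      rw [Polynomial.map_mul, Polynomial.map_mul, hb, Polynomial.map_C, hQ]
      rw [Algebra.smul_def]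
      simp [Polynomial.algebraMap_apply]
      ring
    have : S ∣ Polynomial.C (b : MvPolynomial (Fin d) ℝ) * G := ⟨_, hkey⟩
    rcases hSprime.dvd_or_dvd this with h | h
    · have hCb0 : (Polynomial.C (b : MvPolynomial (Fin d) ℝ)) ≠ 0 := by
        simpa using hb0
      have := Polynomial.natDegree_le_of_dvd h hCb0
      simp at this
      exact hSdeg this
    · exact hSG h
  have hco : IsCoprime (S.map φ) (G.map φ) := hSkirr.coprime_iff_not_dvd.mpr hSkndvd
  obtain ⟨A, B, hAB⟩ := hco
  obtain ⟨a', hA⟩ := IsLocalization.integerNormalization_map_to_map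
    (nonZeroDivisors (MvPolynomial (Fin d) ℝ)) A
  obtain ⟨b', hB⟩ := IsLocalization.integerNormalization_map_to_map
    (nonZeroDivisors (MvPolynomial (Fin d) ℝ)) B
  set A' := IsLocalization.integerNormalization (nonZeroDivisors (MvPolynomial (Fin d) ℝ)) A
  set B' := IsLocalization.integerNormalization (nonZeroDivisors (MvPolynomial (Fin d) ℝ)) B
  set c : MvPolynomial (Fin d) ℝ := (a' : MvPolynomial (Fin d) ℝ) * (b' : MvPolynomial (Fin d) ℝ)
    with hc
  have hc0 : c ≠ 0 := mul_ne_zero (nonZeroDivisors.coe_ne_zero a') (nonZeroDivisors.coe_ne_zero b')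
  have hid : Polynomial.C (b' : MvPolynomial (Fin d) ℝ) * A' * S
      + Polynomial.C (a' : MvPolynomial (Fin d) ℝ) * B' * G = Polynomial.C c := by
    apply hmapinj
    rw [Polynomial.map_add, Polynomial.map_mul, Polynomial.map_mul, Polynomial.map_mul,
      Polynomial.map_mul, hA, hB, Polynomial.map_C, Polynomial.map_C, Polynomial.map_C, hc]
    rw [Algebra.smul_def, Algebra.smul_def]
    simp only [Polynomial.algebraMap_apply, map_mul]
    linear_combination (Polynomial.C (φ (a' : MvPolynomial (Fin d) ℝ))
      * Polynomial.C (φ (b' : MvPolynomial (Fin d) ℝ))) * hAB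
  -- analytic/IVT part
  have hcont := continuous_eval_aux s
  have hUopen : IsOpen {p : Fin d → ℝ | 0 < eval p s} := isOpen_lt continuous_const hcont
  have hWopen : IsOpen {p : Fin d → ℝ | eval p s < 0} := isOpen_lt hcont continuous_const
  obtain ⟨r₁, hr₁, hball₁⟩ := Metric.isOpen_iff.mp hUopen x hx
  obtain ⟨r₂, hr₂, hball₂⟩ := Metric.isOpen_iff.mp hWopen y hy
  set r := min r₁ r₂ with hrdef
  have hr : 0 < r := lt_min hr₁ hr₂
  have hzero : ∀ p ∈ Metric.ball x r, eval p c = 0 := by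
    intro p hp
    have hps : 0 < eval p s := hball₁ (Metric.ball_subset_ball (min_le_left _ _) hp)
    have hyx : y = x + (y - x) := by funext i; simp
    have hdist : dist (p + (y - x)) y = dist p x := by
      nth_rewrite 2 [hyx]
      exact dist_add_right p x (y - x)
    have hpv : eval (p + (y - x)) s < 0 := by
      apply hball₂
      have hmem : dist p x < r₂ := lt_of_lt_of_le (Metric.mem_ball.mp hp) (min_le_right _ _)
      exact Metric.mem_ball.mpr (by rw [hdist]; exact hmem)
    set f : ℝ → ℝ := fun t => eval (fun i => p i + t * v i) s with hf
    have hf0 : f 0 = eval p s := by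
      have : (fun i => p i + 0 * v i) = p := by funext i; ring
      simp only [hf, this]
    have hf1 : f 1 = eval (p + (y - x)) s := by
      have : (fun i => p i + 1 * v i) = p + (y - x) := by funext i; simp [hv]
      simp only [hf, this]
    have hfc : Continuous f := by
      apply hcont.comp
      exact continuous_pi fun i => continuous_const.add (continuous_id.mul continuous_const)
    have h01 : (0:ℝ) ∈ Set.Icc (f 1) (f 0) := by
      constructor
      · rw [hf1]; exact le_of_lt hpv
      · rw [hf0]; exact le_of_lt hps
    obtain ⟨t₀, _, ht₀⟩ := intermediate_value_Icc' zero_le_one hfc.continuousOn h01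
    have hsp : eval (fun i => p i + t₀ * v i) s = 0 := ht₀
    have hgp : eval (fun i => p i + t₀ * v i) g = 0 := hvan _ hsp
    have hES : Polynomial.eval₂ (MvPolynomial.eval p) t₀ S = 0 := by rw [hS, phi_eval]; exact hsp
    have hEG : Polynomial.eval₂ (MvPolynomial.eval p) t₀ G = 0 := by rw [hG, phi_eval]; exact hgp
    have hE := congrArg (fun q => Polynomial.eval₂ (MvPolynomial.eval p) t₀ q) hid
    simp only [Polynomial.eval₂_add, Polynomial.eval₂_mul, Polynomial.eval₂_C, hES, hEG,
      mul_zero, zero_mul, add_zero, zero_add] at hE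
    exact hE.symm
  exact hc0 (eval_zero_on_ball hr hzero)

end Scratch

theorem psd_not_sos_mul_sq_irreducible_indefinite
    {d n m : ℕ} (F s : MvPolynomial (Fin d) ℝ)
    (hFhom : F.IsHomogeneous n) (hFpsd : IsPSD F) (hFnotsos : ¬ IsSOS F)
    (hshom : s.IsHomogeneous m) (hsirr : Irreducible s) (hsind : IsIndefinite s) :
    IsPSD (s ^ 2 * F) ∧ ¬ IsSOS (s ^ 2 * F) := by
  constructor
  · intro p
    simp only [eval_mul, eval_pow]
    exact mul_nonneg (sq_nonneg _) (hFpsd p)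
  · rintro ⟨k, h, hsum⟩
    have hs0 : s ≠ 0 := by
      rintro rfl
      obtain ⟨⟨x, hx⟩, -⟩ := hsind
      simp at hx
    have hdvd : ∀ i, s ∣ h i := by
      intro i
      apply Scratch.dvd_of_vanish s (h i) hsirr ⟨hsind.1, hsind.2⟩
      intro p hp
      have h0 : ∑ j, (eval p (h j)) ^ 2 = 0 := by
        have := congrArg (eval p) hsum
        simp only [eval_mul, eval_pow, map_sum] at this
        rw [hp] at this
        simpa using this.symm
      have := (Finset.sum_eq_zero_iff_of_nonneg
        (fun j _ => sq_nonneg (eval p (h j)))).mp h0 i (Finset.mem_univ i)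
      exact (pow_eq_zero_iff two_ne_zero).mp this
    choose k' hk' using hdvd
    apply hFnotsos
    refine ⟨k, k', ?_⟩
    have hcancel : s ^ 2 * F = s ^ 2 * ∑ i, (k' i) ^ 2 := by
      rw [hsum, Finset.mul_sum]
      apply Finset.sum_congr rfl
      intro i _
      rw [hk' i]; ring
    exact mul_left_cancel₀ (pow_ne_zero 2 hs0) hcancel
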